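/- arXiv:1109.4622 — 4 statements merged into one kernel-verified Lean document; each statement's English description precedes it below -/
import Mathlib

section
/- If A is a simple graph on a vertices and B a simple graph on b vertices (disjoint vertex sets), and A × B denotes the join (all edges between A and B added), then P(λ, A × B) = (λ − a − b) · P(λ − b, A) · P(λ − a, B), where L(λ, H) = λ·P(λ, H) is the Laplacian characteristic polynomial. -/
open Polynomial Matrix Finset

set_option linter.unusedSectionVars false

open Polynomial Matrix Finset

/-- Shifting a real matrix by `c • 1` composes the characteristic polynomial with `X - C c`. -/
private lemma charpoly_add_smul_one' {n : Type*} [DecidableEq n] [Fintype n]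
    (M : Matrix n n ℝ) (c : ℝ) :
    (M + c • (1 : Matrix n n ℝ)).charpoly = M.charpoly.comp (X - C c) := by
  unfold Matrix.charpoly
  have h1 : (charmatrix M).det.comp (X - C c)
      = ((charmatrix M).map (Polynomial.eval₂RingHom Polynomial.C (X - C c))).det := by
    have := RingHom.map_det (Polynomial.eval₂RingHom Polynomial.C
      (X - C c : Polynomial ℝ)) (charmatrix M)
    simpa [RingHom.mapMatrix_apply, Polynomial.comp] using this
  rw [h1]
  congr 1
  ext i j
  by_cases h : i = j <;>
    simp [charmatrix_apply, diagonal_apply, h, Matrix.one_apply, C_add, sub_sub, add_comm]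

/-- Key determinant identity for a block matrix with all-ones off-diagonal blocks, where both
diagonal blocks have constant row sums. -/
private lemma det_key' {m n K : Type*} [Fintype m] [Fintype n] [DecidableEq m] [DecidableEq n]
    [Field K] (S : Matrix m m K) (T : Matrix n n K) (s t : K)
    (hs : s ≠ 0) (ht : t ≠ 0)
    (hS : S *ᵥ (fun _ => 1) = fun _ => s)
    (hT : T *ᵥ (fun _ => 1) = fun _ => t)
    (hSd : S.det ≠ 0) (hTd : T.det ≠ 0) :
    t * s * (Matrix.fromBlocks S (Matrix.of fun _ _ => 1) (Matrix.of fun _ _ => 1) T).det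
      = (t * s - (Fintype.card m : K) * (Fintype.card n : K)) * S.det * T.det := by
  haveI := S.invertibleOfIsUnitDet (isUnit_iff_ne_zero.2 hSd)
  have hSd' : IsUnit S.det := isUnit_iff_ne_zero.2 hSd
  have hTd' : IsUnit T.det := isUnit_iff_ne_zero.2 hTd
  rw [Matrix.det_fromBlocks₁₁]
  have hinv : ∀ k, ∑ l, (S⁻¹ : Matrix m m K) k l = s⁻¹ := by
    have h1 : (S⁻¹ : Matrix m m K) *ᵥ (S *ᵥ (fun _ => 1)) = fun _ => 1 := by
      rw [mulVec_mulVec, Matrix.nonsing_inv_mul S hSd', one_mulVec]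
    rw [hS] at h1
    intro k
    have h2 : (∑ l, (S⁻¹ : Matrix m m K) k l) * s = 1 := by
      have := congrFun h1 k
      simpa [mulVec, dotProduct, Finset.sum_mul] using this
    have h3 := congrArg (· * s⁻¹) h2
    simpa [mul_assoc, mul_inv_cancel₀ hs] using h3
  have hblock : (Matrix.of fun _ _ => (1:K) : Matrix n m K) * (⅟S : Matrix m m K)
        * (Matrix.of fun _ _ => (1:K) : Matrix m n K)
      = Matrix.of fun _ _ => (Fintype.card m : K) * s⁻¹ := by
    ext i j
    simp only [Matrix.mul_apply, Matrix.of_apply, one_mul, mul_one,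
      Matrix.invOf_eq_nonsing_inv]
    rw [Finset.sum_comm]
    simp [hinv, Finset.card_univ]
  rw [hblock]
  have hcol : (T - Matrix.of fun _ _ => (Fintype.card m : K) * s⁻¹)
      = T + Matrix.replicateCol Unit (fun _ : n => -((Fintype.card m : K) * s⁻¹))
          * Matrix.replicateRow Unit (fun _ : n => (1:K)) := by
    ext i j
    simp [Matrix.mul_apply, sub_eq_add_neg]
  rw [hcol, Matrix.det_add_replicateCol_mul_replicateRow hTd']
  have hTinv : ∀ k, ∑ l, (T⁻¹ : Matrix n n K) k l = t⁻¹ := by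
    have h1 : (T⁻¹ : Matrix n n K) *ᵥ (T *ᵥ (fun _ => 1)) = fun _ => 1 := by
      rw [mulVec_mulVec, Matrix.nonsing_inv_mul T hTd', one_mulVec]
    rw [hT] at h1
    intro k
    have h2 : (∑ l, (T⁻¹ : Matrix n n K) k l) * t = 1 := by
      have := congrFun h1 k
      simpa [mulVec, dotProduct, Finset.sum_mul] using this
    have h3 := congrArg (· * t⁻¹) h2
    simpa [mul_assoc, mul_inv_cancel₀ ht] using h3
  have h11 : (1 + Matrix.replicateRow Unit (fun _ : n => (1:K)) * T⁻¹
        * Matrix.replicateCol Unit (fun _ : n => -((Fintype.card m : K) * s⁻¹))).det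
      = 1 - (Fintype.card m : K) * (Fintype.card n : K) * s⁻¹ * t⁻¹ := by
    rw [Matrix.det_unique]
    simp only [Matrix.add_apply, Matrix.one_apply_eq, Matrix.mul_apply, Matrix.replicateRow_apply,
      Matrix.replicateCol_apply, one_mul, Finset.univ_unique, Finset.sum_singleton]
    rw [← Finset.sum_mul, Finset.sum_comm]
    simp only [hTinv, Finset.sum_const, Finset.card_univ, nsmul_eq_mul, mul_neg]
    ring
  rw [h11]
  field_simp



/-- The join `A × B` of two graphs on disjoint vertex sets: keep the edges of `A` and `B`
and add all edges between `V(A)` and `V(B)`. -/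
def SimpleGraph.join {α β : Type*} (A : SimpleGraph α) (B : SimpleGraph β) :
    SimpleGraph (α ⊕ β) where
  Adj x y :=
    match x, y with
    | Sum.inl a, Sum.inl a' => A.Adj a a'
    | Sum.inr b, Sum.inr b' => B.Adj b b'
    | Sum.inl _, Sum.inr _ => True
    | Sum.inr _, Sum.inl _ => True
  symm := by
    constructor
    rintro (a | a) (b | b) h
    · exact A.symm.symm _ _ h
    · trivial
    · trivial
    · exact B.symm.symm _ _ h
  loopless := by
    constructor
    rintro (a | b) h
    · exact A.loopless.irrefl a h
    · exact B.loopless.irrefl b h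

section joinlemmas

variable {α β : Type*} [Fintype α] [Fintype β] [DecidableEq α] [DecidableEq β]
    (A : SimpleGraph α) (B : SimpleGraph β)
    [DecidableRel A.Adj] [DecidableRel B.Adj] [DecidableRel (A.join B).Adj]

@[simp] private lemma join_adj_ll {a a' : α} :
    (A.join B).Adj (Sum.inl a) (Sum.inl a') ↔ A.Adj a a' := Iff.rfl
@[simp] private lemma join_adj_rr {b b' : β} :
    (A.join B).Adj (Sum.inr b) (Sum.inr b') ↔ B.Adj b b' := Iff.rfl
@[simp] private lemma join_adj_lr {a : α} {b : β} : (A.join B).Adj (Sum.inl a) (Sum.inr b) := trivial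
@[simp] private lemma join_adj_rl {a : α} {b : β} : (A.join B).Adj (Sum.inr b) (Sum.inl a) := trivial

private lemma join_degree_inl (v : α) :
    (A.join B).degree (Sum.inl v) = A.degree v + Fintype.card β := by
  classical
  rw [SimpleGraph.degree, SimpleGraph.neighborFinset_eq_filter, Finset.card_filter,
    Fintype.sum_sum_type]
  simp only [join_adj_ll, join_adj_lr, if_true]
  congr 1
  · rw [SimpleGraph.degree, SimpleGraph.neighborFinset_eq_filter, Finset.card_filter]
  · simp [Finset.card_univ]

private lemma join_degree_inr (v : β) :
    (A.join B).degree (Sum.inr v) = B.degree v + Fintype.card α := by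
  classical
  rw [SimpleGraph.degree, SimpleGraph.neighborFinset_eq_filter, Finset.card_filter,
    Fintype.sum_sum_type, add_comm]
  simp only [join_adj_rr, join_adj_rl, if_true]
  congr 1
  · rw [SimpleGraph.degree, SimpleGraph.neighborFinset_eq_filter, Finset.card_filter]
  · simp [Finset.card_univ]

private lemma lap_join_eq :
    (A.join B).lapMatrix ℝ = Matrix.fromBlocks
      (A.lapMatrix ℝ + (Fintype.card β : ℝ) • 1)
      (Matrix.of fun _ _ => (-1 : ℝ))
      (Matrix.of fun _ _ => (-1 : ℝ))
      (B.lapMatrix ℝ + (Fintype.card α : ℝ) • 1) := by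
  ext (i | i) (j | j) <;>
    simp [SimpleGraph.lapMatrix, SimpleGraph.degMatrix, Matrix.diagonal_apply,
      Matrix.one_apply, join_degree_inl A B, join_degree_inr A B, Matrix.smul_apply] <;>
    by_cases h : i = j <;>
    simp [h]

end joinlemmas

private lemma rowsum_charmatrix {α : Type*} [Fintype α] [DecidableEq α]
    (M : Matrix α α ℝ) (c : ℝ) (hM : ∀ i, ∑ j, M i j = c) :
    ((charmatrix M).map (algebraMap (Polynomial ℝ) (RatFunc ℝ))) *ᵥ (fun _ => 1)
      = fun _ => algebraMap (Polynomial ℝ) (RatFunc ℝ) (X - C c) := by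
  funext i
  have : ∑ j, charmatrix M i j = X - C c := by
    simp only [charmatrix_apply, Finset.sum_sub_distrib]
    rw [← map_sum, hM]
    congr 1
    simp [Matrix.diagonal_apply, Finset.sum_ite_eq, Matrix.scalar_apply]
  simp only [mulVec, dotProduct, Matrix.map_apply, mul_one]
  rw [← map_sum, this]

private lemma rowsum_shift {α : Type*} [Fintype α] [DecidableEq α]
    (A : SimpleGraph α) [DecidableRel A.Adj] (c : ℝ) (i : α) :
    ∑ j, (A.lapMatrix ℝ + c • (1 : Matrix α α ℝ)) i j = c := by
  have h := congrFun (A.lapMatrix_mulVec_const_eq_zero (R := ℝ)) i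
  simp only [mulVec, dotProduct, mul_one, Pi.zero_apply] at h
  simp [Finset.sum_add_distrib, h, Matrix.smul_apply, Matrix.one_apply,
    Finset.sum_ite_eq, Finset.mem_univ]

/-- If `A` is a simple graph on `a` vertices, `B` a simple graph on `b` vertices, and
`A × B` their join, then with `L(λ, H) = λ · P(λ, H)` the Laplacian characteristic
polynomial, `P(λ, A × B) = (λ − a − b) · P(λ − b, A) · P(λ − a, B)`. -/
theorem lap_charpoly_join {α β : Type*} [Fintype α] [Fintype β]
    [DecidableEq α] [DecidableEq β]
    (A : SimpleGraph α) (B : SimpleGraph β)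
    [DecidableRel A.Adj] [DecidableRel B.Adj] [DecidableRel (A.join B).Adj]
    (pA pB pJ : Polynomial ℝ)
    (hA : (A.lapMatrix ℝ).charpoly = Polynomial.X * pA)
    (hB : (B.lapMatrix ℝ).charpoly = Polynomial.X * pB)
    (hJ : ((A.join B).lapMatrix ℝ).charpoly = Polynomial.X * pJ) :
    pJ = (Polynomial.X - Polynomial.C ((Fintype.card α : ℝ) + (Fintype.card β : ℝ)))
        * (pA.comp (Polynomial.X - Polynomial.C (Fintype.card β : ℝ)))
        * (pB.comp (Polynomial.X - Polynomial.C (Fintype.card α : ℝ))) := by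
  classical
  set a' : ℝ := (Fintype.card α : ℝ) with ha'
  set b' : ℝ := (Fintype.card β : ℝ) with hb'
  set M : Matrix α α ℝ := A.lapMatrix ℝ + b' • 1 with hMdef
  set N : Matrix β β ℝ := B.lapMatrix ℝ + a' • 1 with hNdef
  set φ : Polynomial ℝ →+* RatFunc ℝ := (algebraMap (Polynomial ℝ) (RatFunc ℝ)) with hφdef
  have hφ : Function.Injective φ := RatFunc.algebraMap_injective ℝ
  -- determinants as mapped charpolys
  have hdetS : ((charmatrix M).map φ).det = φ M.charpoly := by
    rw [Matrix.charpoly, RingHom.map_det, RingHom.mapMatrix_apply]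
  have hdetT : ((charmatrix N).map φ).det = φ N.charpoly := by
    rw [Matrix.charpoly, RingHom.map_det, RingHom.mapMatrix_apply]
  have hSd : ((charmatrix M).map φ).det ≠ 0 := by
    rw [hdetS]
    exact (map_ne_zero_iff φ hφ).mpr (Matrix.charpoly_monic M).ne_zero
  have hTd : ((charmatrix N).map φ).det ≠ 0 := by
    rw [hdetT]
    exact (map_ne_zero_iff φ hφ).mpr (Matrix.charpoly_monic N).ne_zero
  have hs : φ (X - C b') ≠ 0 := (map_ne_zero_iff φ hφ).mpr (X_sub_C_ne_zero b')
  have ht : φ (X - C a') ≠ 0 := (map_ne_zero_iff φ hφ).mpr (X_sub_C_ne_zero a')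
  -- block structure of the mapped charmatrix of the join's Laplacian
  have hD : (charmatrix ((A.join B).lapMatrix ℝ)).map φ
      = Matrix.fromBlocks ((charmatrix M).map φ) (Matrix.of fun _ _ => 1)
          (Matrix.of fun _ _ => 1) ((charmatrix N).map φ) := by
    have h1 : ((-(Matrix.of fun _ _ => (-1:ℝ) : Matrix α β ℝ).map C)).map φ
        = (Matrix.of fun _ _ => (1 : RatFunc ℝ) : Matrix α β (RatFunc ℝ)) := by
      ext i j; simp [Matrix.map_apply]
    have h2 : ((-(Matrix.of fun _ _ => (-1:ℝ) : Matrix β α ℝ).map C)).map φ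
        = (Matrix.of fun _ _ => (1 : RatFunc ℝ) : Matrix β α (RatFunc ℝ)) := by
      ext i j; simp [Matrix.map_apply]
    rw [lap_join_eq A B, charmatrix_fromBlocks, Matrix.fromBlocks_map, h1, h2]
  have hdetD : φ ((A.join B).lapMatrix ℝ).charpoly
      = (Matrix.fromBlocks ((charmatrix M).map φ) (Matrix.of fun _ _ => 1)
          (Matrix.of fun _ _ => 1) ((charmatrix N).map φ)).det := by
    rw [← hD, Matrix.charpoly, RingHom.map_det, RingHom.mapMatrix_apply]
  -- apply the determinant identity
  have key := det_key' ((charmatrix M).map φ) ((charmatrix N).map φ)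
    (φ (X - C b')) (φ (X - C a')) hs ht
    (rowsum_charmatrix M b' (rowsum_shift A b'))
    (rowsum_charmatrix N a' (rowsum_shift B a'))
    hSd hTd
  rw [← hdetD, hdetS, hdetT] at key
  -- pull the identity back to polynomials
  have hca : φ (C a') = (Fintype.card α : RatFunc ℝ) := by
    rw [ha', Polynomial.C_eq_natCast, map_natCast]
  have hcb : φ (C b') = (Fintype.card β : RatFunc ℝ) := by
    rw [hb', Polynomial.C_eq_natCast, map_natCast]
  have keyP : (X - C a') * (X - C b') * ((A.join B).lapMatrix ℝ).charpoly
      = ((X - C a') * (X - C b') - C a' * C b') * M.charpoly * N.charpoly := by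
    apply hφ
    rw [← hca, ← hcb] at key
    simp only [_root_.map_mul, map_sub] at key ⊢
    exact key
  -- express the shifted charpolys
  have hM' : M.charpoly = (X - C b') * pA.comp (X - C b') := by
    rw [hMdef, charpoly_add_smul_one', hA, mul_comp, X_comp]
  have hN' : N.charpoly = (X - C a') * pB.comp (X - C a') := by
    rw [hNdef, charpoly_add_smul_one', hB, mul_comp, X_comp]
  rw [hJ, hM', hN'] at keyP
  have hf : (X * ((X - C a') * (X - C b')) : Polynomial ℝ) ≠ 0 :=
    mul_ne_zero X_ne_zero (mul_ne_zero (X_sub_C_ne_zero a') (X_sub_C_ne_zero b'))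
  refine mul_left_cancel₀ hf ?_
  rw [Polynomial.C_add]
  linear_combination keyP
end

section
/- (Generalized Matrix Tree Theorem) Let G be a finite graph with vertex set V and X ⊆ V nonempty. Then det(L_X(G)) equals the number of spanning forests F of G such that every component of F contains exactly one vertex of X, where L_X(G) is the Laplacian matrix with the rows and columns indexed by X deleted. -/
open Finset
namespace MTT
variable {V : Type*} [Fintype V] [DecidableEq V]

/-- one step of the parent function, fixing `X` pointwise -/
def nxt (X : Finset V) (f : {v : V // v ∉ X} → V) (v : V) : V :=
  if h : v ∉ X then f ⟨v, h⟩ else v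

lemma nxt_of_mem {X : Finset V} {f : {v : V // v ∉ X} → V} {v : V} (h : v ∈ X) :
    nxt X f v = v := by simp [nxt, h]

lemma nxt_coe {X : Finset V} {f : {v : V // v ∉ X} → V} (a : {v : V // v ∉ X}) :
    nxt X f ↑a = f a := by simp [nxt, a.2]

/-- the matrix `1 - P_f` -/
def Mf (X : Finset V) (f : {v : V // v ∉ X} → V) :
    Matrix {v : V // v ∉ X} {v : V // v ∉ X} ℝ :=
  Matrix.of fun a b => (if (a : V) = b then (1:ℝ) else 0) - (if f a = ↑b then 1 else 0)

lemma det_Mf_of_reaches {X : Finset V} {f : {v : V // v ∉ X} → V}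
    (hr : ∀ a : {v : V // v ∉ X}, ∃ n, (nxt X f)^[n] ↑a ∈ X) :
    (Mf X f).det = 1 := by
  classical
  rw [Matrix.det_apply]
  rw [Finset.sum_eq_single 1]
  · have h1 : ∀ a : {v : V // v ∉ X}, f a ≠ ↑a := by
      intro a ha
      obtain ⟨n, hn⟩ := hr a
      have : (nxt X f)^[n] ↑a = ↑a := Function.iterate_fixed (by rw [nxt_coe, ha]) n
      rw [this] at hn
      exact a.2 hn
    simp only [Equiv.Perm.sign_one, one_smul, Equiv.Perm.one_apply]
    rw [Finset.prod_eq_one]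
    intro a _
    simp [Mf, h1 a]
  · intro σ _ hσ
    have : ∏ a, Mf X f (σ a) a = 0 := by
      by_contra hP
      have key : ∀ a, σ a ≠ a → f (σ a) = ↑a := by
        intro a hne
        have hfac := Finset.prod_ne_zero_iff.mp hP a (mem_univ a)
        have hco : ((σ a : V) = (a : V)) = False := by
          simp [Subtype.coe_injective.eq_iff, hne]
        simp only [Mf, Matrix.of_apply, hco, if_false, zero_sub, neg_ne_zero,
          ite_ne_right_iff] at hfac
        exact hfac.1
      obtain ⟨a₀, ha₀⟩ : ∃ a, σ a ≠ a := by
        by_contra h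
        push_neg at h
        exact hσ (Equiv.ext h)
      have claim : ∀ n, σ ((σ⁻¹ ^ n) a₀) ≠ (σ⁻¹ ^ n) a₀ ∧
          (nxt X f)^[n] ↑a₀ = ↑((σ⁻¹ ^ n) a₀) := by
        intro n
        induction n with
        | zero => simpa using ha₀
        | succ n ih =>
          obtain ⟨ih1, ih2⟩ := ih
          set c := (σ⁻¹ ^ n) a₀ with hc
          have hpow : (σ⁻¹ ^ (n+1)) a₀ = σ⁻¹ c := by
            rw [pow_succ']
            rfl
          have hs : σ (σ⁻¹ c) = c := σ.apply_symm_apply c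
          have g1 : σ (σ⁻¹ c) ≠ σ⁻¹ c := by
            intro h
            have e : σ⁻¹ c = c := h.symm.trans hs
            exact ih1 (by calc σ c = σ (σ⁻¹ c) := by rw [e]
                            _ = c := hs)
          have hk := key (σ⁻¹ c) g1
          rw [hs] at hk
          constructor
          · rw [hpow]; exact g1
          · rw [hpow, Function.iterate_succ_apply', ih2, nxt_coe, hk]
      obtain ⟨n, hn⟩ := hr a₀
      rw [(claim n).2] at hn
      exact ((σ⁻¹ ^ n) a₀).2 hn
    rw [this, smul_zero]
  · simp


lemma det_Mf_of_not_reaches {X : Finset V} {f : {v : V // v ∉ X} → V}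
    (hr : ¬ ∀ a : {v : V // v ∉ X}, ∃ n, (nxt X f)^[n] ↑a ∈ X) :
    (Mf X f).det = 0 := by
  classical
  push_neg at hr
  obtain ⟨a₀, ha₀⟩ := hr
  -- find a periodic point
  obtain ⟨i, j, hij, he⟩ : ∃ i j : ℕ, i ≠ j ∧ (nxt X f)^[i] ↑a₀ = (nxt X f)^[j] ↑a₀ :=
    Finite.exists_ne_map_eq_of_infinite _
  wlog hlt : i < j generalizing i j
  · exact this j i hij.symm he.symm (by omega)
  set nx := nxt X f with hnx
  set b := nx^[i] ↑a₀ with hb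
  set p := j - i with hp
  have hp0 : 0 < p := by omega
  have hpb : nx^[p] b = b := by
    rw [hb, ← Function.iterate_add_apply, hp]
    rw [show j - i + i = j by omega, ← he]
  have hbX : ∀ n, nx^[n] b ∉ X := by
    intro n
    rw [hb, ← Function.iterate_add_apply]
    exact ha₀ _
  have hper : ∀ m, nx^[m + p] b = nx^[m] b := by
    intro m
    rw [Function.iterate_add_apply, hpb]
  set C : Finset V := (Finset.range p).image (fun n => nx^[n] b) with hC
  have hmemC : ∀ m, nx^[m] b ∈ C := by
    intro m
    induction m using Nat.strong_induction_on with
    | _ m ih =>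
      by_cases h : m < p
      · exact Finset.mem_image.mpr ⟨m, Finset.mem_range.mpr h, rfl⟩
      · have : m - p + p = m := by omega
        rw [← this, hper]
        exact ih _ (by omega)
  have hCiter : ∀ c ∈ C, ∃ n, c = nx^[n] b := by
    intro c hc
    obtain ⟨n, _, rfl⟩ := Finset.mem_image.mp hc
    exact ⟨n, rfl⟩
  have hCX : ∀ c ∈ C, c ∉ X := by
    intro c hc
    obtain ⟨n, rfl⟩ := hCiter c hc
    exact hbX n
  have hnxC : ∀ c ∈ C, nx c ∈ C := by
    intro c hc
    obtain ⟨n, rfl⟩ := hCiter c hc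
    have : nx (nx^[n] b) = nx^[n+1] b := (Function.iterate_succ_apply' nx n b).symm
    rw [this]
    exact hmemC _
  have hnxpC : ∀ c ∈ C, nx^[p-1] c ∈ C := by
    intro c hc
    obtain ⟨n, rfl⟩ := hCiter c hc
    rw [← Function.iterate_add_apply]
    exact hmemC _
  have hpc : ∀ c ∈ C, nx^[p] c = c := by
    intro c hc
    obtain ⟨n, rfl⟩ := hCiter c hc
    rw [← Function.iterate_add_apply, Nat.add_comm, hper]
  rw [← Matrix.exists_vecMul_eq_zero_iff]
  refine ⟨fun a => if (a : V) ∈ C then 1 else 0, ?_, ?_⟩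
  · intro h
    have hbC : b ∈ C := by simpa using hmemC 0
    have := congrFun h ⟨b, hbX 0⟩
    simp [hbC] at this
  · funext b'
    simp only [Matrix.vecMul, dotProduct, Pi.zero_apply]
    have expand : ∀ a : {v : V // v ∉ X},
        (if (a : V) ∈ C then (1:ℝ) else 0) * Mf X f a b' =
          ((if (a : V) ∈ C then (1:ℝ) else 0) * (if (a : V) = ↑b' then 1 else 0))
          - ((if (a : V) ∈ C then (1:ℝ) else 0) * (if f a = ↑b' then 1 else 0)) := by
      intro a
      simp [Mf, mul_sub]
    rw [Finset.sum_congr rfl (fun a _ => expand a), Finset.sum_sub_distrib]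
    have e1 : ∑ a : {v : V // v ∉ X},
        (if (a : V) ∈ C then (1:ℝ) else 0) * (if (a : V) = ↑b' then 1 else 0)
        = if (b' : V) ∈ C then 1 else 0 := by
      rw [Finset.sum_eq_single b']
      · simp
      · intro a _ hne
        have : ((a : V) = ↑b') = False := by
          simp [Subtype.coe_injective.eq_iff, hne]
        simp [this]
      · simp
    have e2 : ∑ a : {v : V // v ∉ X},
        (if (a : V) ∈ C then (1:ℝ) else 0) * (if f a = ↑b' then 1 else 0)
        = if (b' : V) ∈ C then 1 else 0 := by
      -- sum over subtype = sum over C of indicator (nx c = b')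
      have step1 : ∑ a : {v : V // v ∉ X},
          (if (a : V) ∈ C then (1:ℝ) else 0) * (if f a = ↑b' then 1 else 0)
          = ∑ c ∈ C, (if nx c = ↑b' then 1 else 0) := by
        have conv1 : ∀ a : {v : V // v ∉ X},
            (if (a : V) ∈ C then (1:ℝ) else 0) * (if f a = ↑b' then 1 else 0)
            = (fun v => if v ∈ C then (if nx v = ↑b' then (1:ℝ) else 0) else 0) ↑a := by
          intro a
          simp only [boole_mul]
          by_cases h : (a : V) ∈ C
          · simp only [h, if_true]
            rw [show nx ↑a = f a from nxt_coe a]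
          · simp [h]
        rw [Finset.sum_congr rfl (fun a _ => conv1 a)]
        rw [← Finset.sum_subtype Xᶜ (fun v => Finset.mem_compl)
          (fun v => if v ∈ C then (if nx v = ↑b' then (1:ℝ) else 0) else 0)]
        rw [Finset.sum_ite_mem]
        congr 1
        exact Finset.inter_eq_right.mpr (fun c hc => Finset.mem_compl.mpr (hCX c hc))
      have step2 : ∑ c ∈ C, (if nx c = ↑b' then (1:ℝ) else 0)
          = ∑ c ∈ C, (if c = ↑b' then (1:ℝ) else 0) := by
        refine Finset.sum_nbij' nx (nx^[p-1]) hnxC hnxpC ?_ ?_ ?_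
        · intro c hc
          have h1 : nx^[p-1] (nx c) = nx^[p] c := by
            rw [← Function.iterate_succ_apply, Nat.succ_eq_add_one]
            congr 1
            omega
          rw [h1, hpc c hc]
        · intro c hc
          have h1 : nx (nx^[p-1] c) = nx^[p] c := by
            rw [← Function.iterate_succ_apply' nx (p-1) c]
            congr 1
            omega
          rw [h1, hpc c hc]
        · intro c _
          rfl
      rw [step1, step2, Finset.sum_ite_eq' C (↑b' : V) (fun _ => (1:ℝ))]
    rw [e1, e2, sub_self]


lemma lap_det_expand (G : SimpleGraph V) [DecidableRel G.Adj] (X : Finset V) :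
    ((G.lapMatrix ℝ).submatrix (fun v : {v : V // v ∉ X} => (v : V))
        (fun v : {v : V // v ∉ X} => (v : V))).det
    = ∑ f : {v : V // v ∉ X} → V,
        (∏ a : {v : V // v ∉ X}, (if G.Adj ↑a (f a) then (1:ℝ) else 0)) * (Mf X f).det := by
  classical
  set S := {v : V // v ∉ X}
  set w : S → V → ℝ := fun a c => if G.Adj ↑a c then (1:ℝ) else 0 with hw
  set r : S → V → (S → ℝ) :=
    fun a c b => (if (a : V) = ↑b then (1:ℝ) else 0) - (if c = ↑b then 1 else 0) with hr
  have hrow : ((G.lapMatrix ℝ).submatrix (fun v : S => (v : V)) (fun v : S => (v : V)))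
      = Matrix.of (fun a : S => ∑ c : V, w a c • r a c) := by
    ext a b
    have hdeg : ∑ c : V, w a c = (G.degree ↑a : ℝ) := by
      simp [hw, Finset.sum_boole, SimpleGraph.degree, SimpleGraph.neighborFinset_eq_filter]
    simp only [Matrix.submatrix_apply, Matrix.of_apply, SimpleGraph.lapMatrix,
      SimpleGraph.degMatrix, SimpleGraph.adjMatrix, Matrix.sub_apply, Matrix.diagonal,
      Matrix.of_apply, Finset.sum_apply, Pi.smul_apply, smul_eq_mul, hr, mul_sub]
    rw [Finset.sum_sub_distrib, ← Finset.sum_mul, hdeg]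
    have e2 : ∑ c : V, w a c * (if c = (b : V) then (1:ℝ) else 0)
        = w a ↑b := by
      have : ∀ c : V, w a c * (if c = (b : V) then (1:ℝ) else 0)
          = if c = (b : V) then w a c else 0 := by
        intro c; rw [mul_ite, mul_one, mul_zero]
      rw [Finset.sum_congr rfl (fun c _ => this c), Finset.sum_ite_eq' Finset.univ]
      simp
    rw [e2]
    rw [mul_ite, mul_one, mul_zero]
  rw [hrow]
  have hdet : ∀ M : Matrix S S ℝ, M.det =
      (Matrix.detRowAlternating : (S → ℝ) [⋀^S]→ₗ[ℝ] ℝ).toMultilinearMap M := fun _ => rfl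
  rw [hdet]
  have hms := (Matrix.detRowAlternating :
      (S → ℝ) [⋀^S]→ₗ[ℝ] ℝ).toMultilinearMap.map_sum (fun a c => w a c • r a c)
  rw [show (Matrix.of fun a : S => ∑ c : V, w a c • r a c : Matrix S S ℝ)
      = (fun a : S => ∑ c : V, w a c • r a c) from rfl]
  rw [hms]
  refine Finset.sum_congr rfl fun f _ => ?_
  rw [MultilinearMap.map_smul_univ]
  rw [smul_eq_mul]
  rfl

/-! ### heights and roots -/

def Reaches (X : Finset V) (f : {v : V // v ∉ X} → V) : Prop :=
  ∀ v : V, ∃ n, (nxt X f)^[n] v ∈ X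

lemma reaches_of_forall {X : Finset V} {f : {v : V // v ∉ X} → V}
    (h : ∀ a : {v : V // v ∉ X}, ∃ n, (nxt X f)^[n] ↑a ∈ X) : Reaches X f := by
  intro v
  by_cases hv : v ∈ X
  · exact ⟨0, hv⟩
  · exact h ⟨v, hv⟩

noncomputable def ht {X : Finset V} {f : {v : V // v ∉ X} → V} (hr : Reaches X f) (v : V) : ℕ :=
  Nat.find (hr v)

noncomputable def root {X : Finset V} {f : {v : V // v ∉ X} → V} (hr : Reaches X f) (v : V) : V :=
  (nxt X f)^[ht hr v] v

lemma root_mem {X : Finset V} {f : {v : V // v ∉ X} → V} (hr : Reaches X f) (v : V) :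
    root hr v ∈ X := Nat.find_spec (hr v)

lemma ht_eq_zero {X : Finset V} {f : {v : V // v ∉ X} → V} (hr : Reaches X f) {v : V}
    (hv : v ∈ X) : ht hr v = 0 := by
  simp [ht, Nat.find_eq_zero, hv]

lemma root_of_mem {X : Finset V} {f : {v : V // v ∉ X} → V} (hr : Reaches X f) {v : V}
    (hv : v ∈ X) : root hr v = v := by
  rw [root, ht_eq_zero hr hv]
  rfl

lemma ht_pos {X : Finset V} {f : {v : V // v ∉ X} → V} (hr : Reaches X f) {v : V}
    (hv : v ∉ X) : 0 < ht hr v := by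
  rcases Nat.eq_zero_or_pos (ht hr v) with h | h
  · exfalso
    have := Nat.find_spec (hr v)
    rw [show ht hr v = Nat.find (hr v) from rfl] at h
    rw [h] at this
    exact hv this
  · exact h

lemma ht_nxt {X : Finset V} {f : {v : V // v ∉ X} → V} (hr : Reaches X f) {v : V}
    (hv : v ∉ X) : ht hr v = ht hr (nxt X f v) + 1 := by
  have h1 : ht hr (nxt X f v) ≤ ht hr v - 1 := by
    apply Nat.find_le
    rw [← Function.iterate_succ_apply]
    have : ht hr v - 1 + 1 = ht hr v := by
      have := ht_pos hr hv
      omega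
    rw [Nat.succ_eq_add_one, this]
    exact Nat.find_spec (hr v)
  have h2 : ht hr v ≤ ht hr (nxt X f v) + 1 := by
    apply Nat.find_le
    rw [Function.iterate_succ_apply]
    exact Nat.find_spec (hr (nxt X f v))
  have := ht_pos hr hv
  omega

lemma root_nxt {X : Finset V} {f : {v : V // v ∉ X} → V} (hr : Reaches X f) {v : V}
    (hv : v ∉ X) : root hr (nxt X f v) = root hr v := by
  rw [root, root, ht_nxt hr hv, Function.iterate_succ_apply]

/-! ### the forest associated to a parent function -/

def fores (X : Finset V) (f : {v : V // v ∉ X} → V) : SimpleGraph V :=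
  SimpleGraph.fromEdgeSet {e | ∃ a : {v : V // v ∉ X}, e = s(↑a, f a)}

lemma fores_adj {X : Finset V} {f : {v : V // v ∉ X} → V} {u v : V} :
    (fores X f).Adj u v ↔
      ((∃ a : {v : V // v ∉ X}, ↑a = u ∧ f a = v) ∨
       (∃ a : {v : V // v ∉ X}, ↑a = v ∧ f a = u)) ∧ u ≠ v := by
  rw [fores, SimpleGraph.fromEdgeSet_adj]
  constructor
  · rintro ⟨⟨a, ha⟩, hne⟩
    rw [Sym2.eq_iff] at ha
    rcases ha with ⟨h1, h2⟩ | ⟨h1, h2⟩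
    · exact ⟨Or.inl ⟨a, h1.symm, h2.symm⟩, hne⟩
    · exact ⟨Or.inr ⟨a, h2.symm, h1.symm⟩, hne⟩
  · rintro ⟨h, hne⟩
    refine ⟨?_, hne⟩
    rcases h with ⟨a, h1, h2⟩ | ⟨a, h1, h2⟩
    · exact ⟨a, by rw [h1, h2]⟩
    · exact ⟨a, by rw [h1, h2, Sym2.eq_swap]⟩

section GoodF

variable {G : SimpleGraph V} [DecidableRel G.Adj] {X : Finset V} {f : {v : V // v ∉ X} → V}

lemma fores_adj_parent (hadj : ∀ a : {v : V // v ∉ X}, G.Adj ↑a (f a))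
    (a : {v : V // v ∉ X}) : (fores X f).Adj ↑a (f a) :=
  fores_adj.mpr ⟨Or.inl ⟨a, rfl, rfl⟩, (hadj a).ne⟩

lemma fores_le (hadj : ∀ a : {v : V // v ∉ X}, G.Adj ↑a (f a)) : fores X f ≤ G := by
  intro u v h
  rcases fores_adj.mp h with ⟨⟨a, h1, h2⟩ | ⟨a, h1, h2⟩, _⟩
  · rw [← h1, ← h2]; exact hadj a
  · rw [← h1, ← h2]; exact (hadj a).symm

lemma fores_edge_cases (hr : Reaches X f) {u v : V} (h : (fores X f).Adj u v) :
    (u ∉ X ∧ v = nxt X f u ∧ ht hr u = ht hr v + 1) ∨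
    (v ∉ X ∧ u = nxt X f v ∧ ht hr v = ht hr u + 1) := by
  rcases fores_adj.mp h with ⟨⟨a, h1, h2⟩ | ⟨a, h1, h2⟩, _⟩
  · left
    have hu : u ∉ X := h1 ▸ a.2
    have hnx : v = nxt X f u := by rw [← h1, nxt_coe, h2]
    exact ⟨hu, hnx, by rw [hnx]; exact ht_nxt hr hu⟩
  · right
    have hv : v ∉ X := h1 ▸ a.2
    have hnx : u = nxt X f v := by rw [← h1, nxt_coe, h2]
    exact ⟨hv, hnx, by rw [hnx]; exact ht_nxt hr hv⟩

lemma root_eq_of_adj (hr : Reaches X f) {u v : V} (h : (fores X f).Adj u v) :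
    root hr u = root hr v := by
  rcases fores_edge_cases hr h with ⟨hu, hnx, _⟩ | ⟨hv, hnx, _⟩
  · rw [hnx, root_nxt hr hu]
  · rw [hnx, root_nxt hr hv]

lemma root_eq_of_walk (hr : Reaches X f) {u v : V} (w : (fores X f).Walk u v) :
    root hr u = root hr v := by
  induction w with
  | nil => rfl
  | cons h _ ih => exact (root_eq_of_adj hr h).trans ih

/-- The path from a vertex to its root, following `f`. -/
lemma walk_to_root (hadj : ∀ a : {v : V // v ∉ X}, G.Adj ↑a (f a)) (hr : Reaches X f) :
    ∀ n (v : V), ht hr v = n →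
      ∃ q : (fores X f).Walk v (root hr v), q.IsPath ∧
        (∀ w ∈ q.support, ht hr w ≤ ht hr v) ∧ (v ∉ X → q.getVert 1 = nxt X f v) := by
  intro n
  induction n using Nat.strong_induction_on with
  | _ n ih =>
    intro v hv
    by_cases hvX : v ∈ X
    · rw [root_of_mem hr hvX]
      exact ⟨SimpleGraph.Walk.nil, by simp, by simp, fun h => absurd hvX h⟩
    · set w := nxt X f v with hw
      have hht : ht hr v = ht hr w + 1 := ht_nxt hr hvX
      obtain ⟨q', hq'path, hq'supp, _⟩ := ih (ht hr w) (by omega) w rfl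
      have hroot : root hr w = root hr v := root_nxt hr hvX
      have hadjvw : (fores X f).Adj v w := by
        have := fores_adj_parent hadj ⟨v, hvX⟩
        rwa [show f ⟨v, hvX⟩ = w by rw [hw, nxt, dif_pos hvX]] at this
      set q'' := q'.copy rfl hroot with hq''
      have hsupp'' : q''.support = q'.support := by rw [hq'']; exact q'.support_copy rfl hroot
      have hnotmem : v ∉ q''.support := by
        rw [hsupp'']
        intro hmem
        have := hq'supp v hmem
        omega
      refine ⟨SimpleGraph.Walk.cons hadjvw q'', ?_, ?_, ?_⟩
      · rw [SimpleGraph.Walk.cons_isPath_iff]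
        exact ⟨by rw [hq'']; rwa [SimpleGraph.Walk.isPath_copy], hnotmem⟩
      · intro x hx
        rw [SimpleGraph.Walk.support_cons] at hx
        rcases List.mem_cons.mp hx with h | h
        · rw [h]
        · rw [hsupp''] at h
          have := hq'supp x h
          omega
      · intro _
        exact SimpleGraph.Walk.snd_cons q'' hadjvw


lemma fores_isAcyclic (hadj : ∀ a : {v : V // v ∉ X}, G.Adj ↑a (f a)) (hr : Reaches X f) :
    (fores X f).IsAcyclic := by
  intro v c hc
  have hnonempty : c.support.toFinset.Nonempty :=
    ⟨v, List.mem_toFinset.mpr c.start_mem_support⟩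
  obtain ⟨u, hu, hmax⟩ := Finset.exists_max_image c.support.toFinset (ht hr) hnonempty
  have hus : u ∈ c.support := List.mem_toFinset.mp hu
  have hc' : (c.rotate u hus).IsCycle := hc.rotate hus
  have htail : ∀ w, w ∈ (c.rotate u hus).support.tail → w ∈ c.support := by
    intro w hw
    have h1 : w ∈ c.support.tail :=
      (SimpleGraph.Walk.support_rotate c u hus).mem_iff.mp hw
    rw [SimpleGraph.Walk.support_eq_cons c]
    exact List.mem_cons_of_mem _ h1
  obtain ⟨y, hady, q, hq⟩ := SimpleGraph.Walk.not_nil_iff.mp hc'.not_nil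
  have hqcyc := hc'
  rw [hq] at hqcyc
  have hqdata := (SimpleGraph.Walk.cons_isCycle_iff q hady).mp hqcyc
  have hlen : 3 ≤ (c.rotate u hus).length := hc'.three_le_length
  have hqlen : 2 ≤ q.length := by
    rw [hq] at hlen
    simp only [SimpleGraph.Walk.length_cons] at hlen
    omega
  have hqrevnil : ¬ q.reverse.Nil := by
    rw [SimpleGraph.Walk.not_nil_iff_lt_length, SimpleGraph.Walk.length_reverse]
    omega
  obtain ⟨d, hadd, q₂, hq₂⟩ := SimpleGraph.Walk.not_nil_iff.mp hqrevnil
  have hedge : s(u, d) ∈ q.edges := by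
    have h1 : s(u, d) ∈ q.reverse.edges := by
      rw [hq₂, SimpleGraph.Walk.edges_cons]
      exact List.mem_cons_self
    rwa [SimpleGraph.Walk.edges_reverse, List.mem_reverse] at h1
  have hyd : y ≠ d := by
    intro h
    exact hqdata.2 (h ▸ hedge)
  have hy : y ∈ c.support := by
    apply htail
    rw [hq, SimpleGraph.Walk.support_cons]
    exact q.start_mem_support
  have hd : d ∈ c.support := by
    apply htail
    rw [hq, SimpleGraph.Walk.support_cons]
    simp only [List.tail_cons]
    have : d ∈ q.reverse.support := by
      rw [hq₂, SimpleGraph.Walk.support_cons]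
      exact List.mem_cons_of_mem _ q₂.start_mem_support
    rwa [SimpleGraph.Walk.support_reverse, List.mem_reverse] at this
  have hyu : ht hr y ≤ ht hr u := hmax y (List.mem_toFinset.mpr hy)
  have hdu : ht hr d ≤ ht hr u := hmax d (List.mem_toFinset.mpr hd)
  have h1 : y = nxt X f u := by
    rcases fores_edge_cases hr hady with ⟨_, h, _⟩ | ⟨_, _, hh⟩
    · exact h
    · omega
  have h2 : d = nxt X f u := by
    rcases fores_edge_cases hr hadd with ⟨_, h, _⟩ | ⟨_, _, hh⟩
    · exact h
    · omega
  exact hyd (h1.trans h2.symm)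

lemma fores_existsUnique (hadj : ∀ a : {v : V // v ∉ X}, G.Adj ↑a (f a)) (hr : Reaches X f) :
    ∀ c : (fores X f).ConnectedComponent,
      ∃! x, x ∈ X ∧ (fores X f).connectedComponentMk x = c := by
  intro c
  induction c using SimpleGraph.ConnectedComponent.ind with
  | _ v =>
    obtain ⟨q, _, _, _⟩ := walk_to_root hadj hr (ht hr v) v rfl
    refine ⟨root hr v, ⟨root_mem hr v, ?_⟩, ?_⟩
    · exact SimpleGraph.ConnectedComponent.sound q.reverse.reachable
    · rintro y ⟨hyX, hy⟩
      have hreach : (fores X f).Reachable y v :=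
        (SimpleGraph.ConnectedComponent.eq).mp hy
      obtain ⟨w⟩ := hreach
      have h1 : root hr y = root hr v := root_eq_of_walk hr w
      exact (root_of_mem hr hyX).symm.trans h1

end GoodF

lemma eq_of_mem_X {F : SimpleGraph V} {X : Finset V}
    (hF3 : ∀ c : F.ConnectedComponent, ∃! x, x ∈ X ∧ F.connectedComponentMk x = c)
    {x x' : V} (hx : x ∈ X) (hx' : x' ∈ X) (h : F.Reachable x x') : x = x' := by
  obtain ⟨z, _, hz⟩ := hF3 (F.connectedComponentMk x')
  have e1 := hz x ⟨hx, SimpleGraph.ConnectedComponent.sound h⟩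
  have e2 := hz x' ⟨hx', rfl⟩
  rw [e1, e2]


lemma getVert1_eq {F : SimpleGraph V} {X : Finset V} (hF2 : F.IsAcyclic)
    (hF3 : ∀ c : F.ConnectedComponent, ∃! x, x ∈ X ∧ F.connectedComponentMk x = c)
    {u x x' : V} (hx : x ∈ X) (hx' : x' ∈ X)
    (q : F.Walk u x) (q' : F.Walk u x') (hq : q.IsPath) (hq' : q'.IsPath) :
    q.getVert 1 = q'.getVert 1 ∧ q.length = q'.length := by
  have hxx : x = x' := eq_of_mem_X hF3 hx hx' (q.reverse.reachable.trans q'.reachable)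
  subst hxx
  have hpq : (⟨q, hq⟩ : F.Path u x) = ⟨q', hq'⟩ := hF2.path_unique _ _
  have hqq : q = q' := congrArg Subtype.val hpq
  rw [hqq]
  exact ⟨rfl, rfl⟩

lemma good_inj {G : SimpleGraph V} [DecidableRel G.Adj] {X : Finset V}
    {f f' : {v : V // v ∉ X} → V}
    (hadj : ∀ a : {v : V // v ∉ X}, G.Adj ↑a (f a))
    (hadj' : ∀ a : {v : V // v ∉ X}, G.Adj ↑a (f' a))
    (hre : ∀ a : {v : V // v ∉ X}, ∃ n, (nxt X f)^[n] ↑a ∈ X)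
    (hre' : ∀ a : {v : V // v ∉ X}, ∃ n, (nxt X f')^[n] ↑a ∈ X)
    (hEq : fores X f = fores X f') : f = f' := by
  have hr := reaches_of_forall hre
  have hr' := reaches_of_forall hre'
  funext a
  have h1 := walk_to_root hadj hr (ht hr ↑a) ↑a rfl
  rw [hEq] at h1
  obtain ⟨q, hqp, _, hq1⟩ := h1
  obtain ⟨q', hq'p, _, hq'1⟩ := walk_to_root hadj' hr' (ht hr' ↑a) ↑a rfl
  have hkey := getVert1_eq (fores_isAcyclic hadj' hr') (fores_existsUnique hadj' hr')
    (root_mem hr ↑a) (root_mem hr' ↑a) q q' hqp hq'p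
  have e1 : q.getVert 1 = f a := by rw [hq1 a.2, nxt_coe]
  have e2 : q'.getVert 1 = f' a := by rw [hq'1 a.2, nxt_coe]
  rw [← e1, ← e2, hkey.1]

lemma exists_good {G : SimpleGraph V} [DecidableRel G.Adj] {X : Finset V} {F : SimpleGraph V}
    (hF1 : F ≤ G) (hF2 : F.IsAcyclic)
    (hF3 : ∀ c : F.ConnectedComponent, ∃! x, x ∈ X ∧ F.connectedComponentMk x = c) :
    ∃ f : {v : V // v ∉ X} → V, (∀ a : {v : V // v ∉ X}, G.Adj ↑a (f a)) ∧
      (∀ a : {v : V // v ∉ X}, ∃ n, (nxt X f)^[n] ↑a ∈ X) ∧ fores X f = F := by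
  classical
  have hxc : ∀ v : V, ∃ x, x ∈ X ∧ F.connectedComponentMk x = F.connectedComponentMk v :=
    fun v => (hF3 _).exists
  choose xc hxcX hxcmk using hxc
  have hreach : ∀ v, F.Reachable v (xc v) :=
    fun v => ((SimpleGraph.ConnectedComponent.eq).mp (hxcmk v)).symm
  have hpath : ∀ v, ∃ p : F.Walk v (xc v), p.IsPath :=
    fun v => ⟨(((hreach v).some).toPath : F.Path v (xc v)).1,
      (((hreach v).some).toPath : F.Path v (xc v)).2⟩
  choose p hp using hpath
  set f : {v : V // v ∉ X} → V := fun a => (p ↑a).getVert 1 with hf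
  have hne : ∀ a : {v : V // v ∉ X}, (a : V) ≠ xc ↑a := fun a h => a.2 (h ▸ hxcX ↑a)
  have hpnil : ∀ a : {v : V // v ∉ X}, ¬ (p ↑a).Nil :=
    fun a => SimpleGraph.Walk.not_nil_of_ne (hne a)
  have hFadj : ∀ a : {v : V // v ∉ X}, F.Adj ↑a (f a) :=
    fun a => (p ↑a).adj_snd (hpnil a)
  -- the crucial "unique first step" property
  have key : ∀ (w : V), w ∉ X → ∀ (z : V), F.Adj w z → z ∈ (p w).support →
      (p w).getVert 1 = z := by
    intro w hw z hadj hz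
    have htp : ((p w).takeUntil z hz).IsPath := (hp w).takeUntil hz
    have hsing : ((SimpleGraph.Path.singleton hadj : F.Path w z) : F.Walk w z)
        = (p w).takeUntil z hz :=
      congrArg Subtype.val (hF2.path_unique (SimpleGraph.Path.singleton hadj) ⟨_, htp⟩)
    have hspec := (p w).take_spec hz
    rw [← hsing] at hspec
    rw [← hspec]
    rw [show ((SimpleGraph.Path.singleton hadj : F.Walk w z).append ((p w).dropUntil z hz))
        = SimpleGraph.Walk.cons hadj (SimpleGraph.Walk.nil.append ((p w).dropUntil z hz))
        from rfl]
    rw [SimpleGraph.Walk.getVert_cons_succ, SimpleGraph.Walk.getVert_zero]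
  refine ⟨f, fun a => hF1 (hFadj a), ?_, ?_⟩
  · -- reaches X
    have main : ∀ n, ∀ a : {v : V // v ∉ X}, (p ↑a).length ≤ n →
        ∃ m, (nxt X f)^[m] ↑a ∈ X := by
      intro n
      induction n with
      | zero =>
        intro a hlen
        exfalso
        have := SimpleGraph.Walk.not_nil_iff_lt_length.mp (hpnil a)
        omega
      | succ n ih =>
        intro a hlen
        by_cases hfX : f a ∈ X
        · refine ⟨1, ?_⟩
          rw [Function.iterate_one, nxt_coe]
          exact hfX
        · obtain ⟨y, hady, q, hq⟩ := SimpleGraph.Walk.not_nil_iff.mp (hpnil a)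
          have hy : y = f a := by
            rw [hf]
            simp only
            rw [hq, SimpleGraph.Walk.getVert_cons_succ, SimpleGraph.Walk.getVert_zero]
          subst hy
          have hqpath : q.IsPath := by
            have h3 := hp ↑a
            rw [hq] at h3
            exact h3.of_cons
          have hqlen : q.length = (p ↑a).length - 1 := by
            have h4 := congrArg SimpleGraph.Walk.length hq
            simp only [SimpleGraph.Walk.length_cons] at h4
            omega
          have hkey := getVert1_eq hF2 hF3 (hxcX (f a)) (hxcX ↑a) (p (f a)) q (hp (f a)) hqpath
          have hlt : (p (f a)).length ≤ n := by
            rw [hkey.2, hqlen]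
            have := SimpleGraph.Walk.not_nil_iff_lt_length.mp (hpnil a)
            omega
          obtain ⟨m, hm⟩ := ih ⟨f a, hfX⟩ hlt
          refine ⟨m + 1, ?_⟩
          rw [Function.iterate_succ_apply, nxt_coe]
          exact hm
    exact fun a => main (p ↑a).length a le_rfl
  · -- fores X f = F
    apply le_antisymm
    · exact fores_le (G := F) hFadj
    · intro u v huv
      by_cases huX : u ∈ X
      · by_cases hvX : v ∈ X
        · exact absurd (eq_of_mem_X hF3 huX hvX huv.reachable) huv.ne
        · have hu : u = xc v :=
            eq_of_mem_X hF3 huX (hxcX v) (huv.reachable.trans (hreach v))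
          have hz : u ∈ (p v).support := hu ▸ (p v).end_mem_support
          have hk := key v hvX u huv.symm hz
          exact fores_adj.mpr ⟨Or.inr ⟨⟨v, hvX⟩, rfl, hk⟩, huv.ne⟩
      · by_cases hzz : v ∈ (p u).support
        · have hk := key u huX v huv hzz
          exact fores_adj.mpr ⟨Or.inl ⟨⟨u, huX⟩, rfl, hk⟩, huv.ne⟩
        · have hvX : v ∉ X := by
            intro hvmem
            have : v = xc u :=
              eq_of_mem_X hF3 hvmem (hxcX u) (huv.reachable.symm.trans (hreach u))
            exact hzz (this ▸ (p u).end_mem_support)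
          have hcons : (SimpleGraph.Walk.cons huv.symm (p u)).IsPath := by
            rw [SimpleGraph.Walk.cons_isPath_iff]
            exact ⟨hp u, hzz⟩
          have h1 := getVert1_eq hF2 hF3 (hxcX v) (hxcX u) (p v)
            (SimpleGraph.Walk.cons huv.symm (p u)) (hp v) hcons
          have hk : f ⟨v, hvX⟩ = u := by
            rw [hf]
            simp only
            rw [h1.1, SimpleGraph.Walk.getVert_cons_succ, SimpleGraph.Walk.getVert_zero]
          exact fores_adj.mpr ⟨Or.inr ⟨⟨v, hvX⟩, rfl, hk⟩, huv.ne⟩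


theorem main_result (G : SimpleGraph V) [DecidableRel G.Adj] (X : Finset V) :
    ((G.lapMatrix ℝ).submatrix (fun v : {v : V // v ∉ X} => (v : V))
        (fun v : {v : V // v ∉ X} => (v : V))).det =
      (Set.ncard {F : SimpleGraph V | F ≤ G ∧ F.IsAcyclic ∧
        ∀ c : F.ConnectedComponent, ∃! x, x ∈ X ∧ F.connectedComponentMk x = c} : ℝ) := by
  classical
  rw [lap_det_expand G X]
  have hterm : ∀ f : {v : V // v ∉ X} → V,
      (∏ a : {v : V // v ∉ X}, if G.Adj ↑a (f a) then (1:ℝ) else 0) * (Mf X f).det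
      = if (∀ a : {v : V // v ∉ X}, G.Adj ↑a (f a)) ∧
          (∀ a : {v : V // v ∉ X}, ∃ n, (nxt X f)^[n] ↑a ∈ X) then 1 else 0 := by
    intro f
    rw [Finset.prod_boole]
    by_cases h1 : ∀ a : {v : V // v ∉ X}, G.Adj ↑a (f a)
    · by_cases h2 : ∀ a : {v : V // v ∉ X}, ∃ n, (nxt X f)^[n] ↑a ∈ X
      · rw [det_Mf_of_reaches h2, mul_one, if_pos (fun a _ => h1 a), if_pos ⟨h1, h2⟩]
      · rw [det_Mf_of_not_reaches h2, mul_zero, if_neg (fun h => h2 h.2)]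
    · rw [if_neg (fun h => h1 (fun a => h a (Finset.mem_univ a))), zero_mul,
        if_neg (fun h => h1 h.1)]
  rw [Finset.sum_congr rfl (fun f _ => hterm f), Finset.sum_boole]
  have hcard : (Finset.univ.filter (fun f : {v : V // v ∉ X} → V =>
      (∀ a : {v : V // v ∉ X}, G.Adj ↑a (f a)) ∧
      (∀ a : {v : V // v ∉ X}, ∃ n, (nxt X f)^[n] ↑a ∈ X))).card
      = Set.ncard {F : SimpleGraph V | F ≤ G ∧ F.IsAcyclic ∧
        ∀ c : F.ConnectedComponent, ∃! x, x ∈ X ∧ F.connectedComponentMk x = c} := by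
    rw [← Nat.card_coe_set_eq, ← Fintype.card_subtype, ← Nat.card_eq_fintype_card]
    apply Nat.card_congr
    refine Equiv.ofBijective (fun fp => ⟨fores X fp.1,
      fores_le fp.2.1, fores_isAcyclic fp.2.1 (reaches_of_forall fp.2.2),
      fores_existsUnique fp.2.1 (reaches_of_forall fp.2.2)⟩) ⟨?_, ?_⟩
    · intro fp fp' h
      exact Subtype.ext (good_inj fp.2.1 fp'.2.1 fp.2.2 fp'.2.2
        (congrArg Subtype.val h))
    · rintro ⟨F, hF1, hF2, hF3⟩
      obtain ⟨f, h1, h2, h3⟩ := exists_good (X := X) hF1 hF2 hF3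
      exact ⟨⟨f, h1, h2⟩, Subtype.ext h3⟩
  rw [hcard]

end MTT

/-- Generalized Matrix Tree Theorem: for a finite graph `G` with vertex set `V` and a
nonempty `X ⊆ V`, the determinant of `L_X(G)` (the Laplacian with the rows and columns
indexed by `X` deleted) equals the number of spanning forests `F` of `G` such that every
connected component of `F` contains exactly one vertex of `X`. -/
theorem det_lap_submatrix_eq_forestCount {V : Type*} [Fintype V] [DecidableEq V]
    (G : SimpleGraph V) [DecidableRel G.Adj] (X : Finset V) (hX : X.Nonempty) :
    ((G.lapMatrix ℝ).submatrix (fun v : {v : V // v ∉ X} => (v : V))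
        (fun v : {v : V // v ∉ X} => (v : V))).det =
      (Set.ncard {F : SimpleGraph V | F ≤ G ∧ F.IsAcyclic ∧
        ∀ c : F.ConnectedComponent, ∃! x, x ∈ X ∧ F.connectedComponentMk x = c} : ℝ) :=
  MTT.main_result G X
end

section
/- Let G be a finite simple graph with m edges and Laplacian coefficients c_s(G) as defined via det(λI − L(G)) = λ · Σ_s (−1)^s c_s(G) λ^{n−1−s}. Then for every s ∈ {0, ..., m}, (m − s)·c_s(G) = Σ_{e ∈ E(G)} c_s(G − e). -/
/-- `γ(F)`: the product over the connected components of `F` of the number of vertices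
of the component (sensible when `F` is a forest). -/
noncomputable def gammaProd {V : Type*} (F : SimpleGraph V) : ℕ :=
  ∏ᶠ c : F.ConnectedComponent, Nat.card {v : V // F.connectedComponentMk v = c}

/-- The combinatorial Laplacian coefficient:
`c_s(G) = Σ { γ(F) : F a spanning forest of G with s edges }`. -/
noncomputable def forestCoeff {V : Type*} (G : SimpleGraph V) (s : ℕ) : ℕ :=
  ∑ᶠ F ∈ {F : SimpleGraph V | F ≤ G ∧ F.IsAcyclic ∧ F.edgeSet.ncard = s}, gammaProd F

lemma le_deleteEdges_iff {V : Type*} (G F : SimpleGraph V) (e : Sym2 V) :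
    F ≤ G.deleteEdges {e} ↔ F ≤ G ∧ e ∉ F.edgeSet := by
  constructor
  · intro h
    refine ⟨h.trans (SimpleGraph.deleteEdges_le _), fun he => ?_⟩
    have := SimpleGraph.edgeSet_mono h he
    rw [SimpleGraph.edgeSet_deleteEdges] at this
    exact this.2 rfl
  · rintro ⟨hle, he⟩ a b hab
    rw [SimpleGraph.deleteEdges_adj]
    exact ⟨hle hab, fun h => he (h ▸ ((SimpleGraph.mem_edgeSet F).mpr hab))⟩

/-- For a finite simple graph `G` with `m` edges and every `s ∈ {0, …, m}`,
`(m − s) · c_s(G) = Σ_{e ∈ E(G)} c_s(G − e)`. -/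
theorem forestCoeff_recursion {n : ℕ} (G : SimpleGraph (Fin n)) (s : ℕ)
    (hs : s ≤ G.edgeSet.ncard) :
    (G.edgeSet.ncard - s) * forestCoeff G s =
      ∑ᶠ e ∈ G.edgeSet, forestCoeff (G.deleteEdges {e}) s := by
  classical
  have hE : G.edgeSet.Finite := Set.toFinite _
  set E : Finset (Sym2 (Fin n)) := hE.toFinset with hEdef
  have hFor : ∀ H : SimpleGraph (Fin n),
      ({F : SimpleGraph (Fin n) | F ≤ H ∧ F.IsAcyclic ∧ F.edgeSet.ncard = s}).Finite :=
    fun H => Set.toFinite _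
  have hfc : ∀ H : SimpleGraph (Fin n),
      forestCoeff H s = ∑ F ∈ (hFor H).toFinset, gammaProd F :=
    fun H => finsum_mem_eq_finite_toFinset_sum _ _
  have hm : G.edgeSet.ncard = E.card := Set.ncard_eq_toFinset_card _ hE
  -- edge finset of a forest
  have hFE : ∀ F : SimpleGraph (Fin n), F.edgeSet.Finite := fun F => Set.toFinite _
  rw [finsum_mem_eq_finite_toFinset_sum _ hE]
  simp_rw [hfc]
  rw [Finset.sum_comm' (s' := fun F => E \ (hFE F).toFinset)
    (t' := (hFor G).toFinset) (f := fun _ F => gammaProd F)]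
  · rw [Finset.mul_sum]
    refine Finset.sum_congr rfl fun F hF => ?_
    rw [Set.Finite.mem_toFinset] at hF
    obtain ⟨hle, -, hcard⟩ := hF
    have hsub : (hFE F).toFinset ⊆ E := by
      intro e he
      rw [Set.Finite.mem_toFinset] at he ⊢
      exact SimpleGraph.edgeSet_mono hle he
    rw [Finset.sum_const, Finset.card_sdiff_of_subset hsub, smul_eq_mul, hm,
      ← Set.ncard_eq_toFinset_card _ (hFE F), hcard]
  · intro e F
    simp only [hEdef, Set.Finite.mem_toFinset, Finset.mem_sdiff, Set.mem_setOf_eq,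
      le_deleteEdges_iff]
    tauto
end

section
/- For a finite simple graph G on n ≥ 2 vertices, the largest Laplacian eigenvalue satisfies λ_max(G) ≤ max{d(x) + d(y) : x, y ∈ V(G), x ≠ y}. -/
open Polynomial Matrix

/-- Evaluating the characteristic polynomial at `t` gives the determinant of `t • 1 - M`. -/
lemma charpoly_eval_eq_det {m : Type*} [Fintype m] [DecidableEq m] (M : Matrix m m ℝ) (t : ℝ) :
    (M.charpoly).eval t = (t • (1 : Matrix m m ℝ) - M).det := by
  rw [Matrix.charpoly]
  have := (RingHom.map_det (Polynomial.evalRingHom t) (Matrix.charmatrix M)).symm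
  rw [show Polynomial.eval t M.charmatrix.det = ((Polynomial.evalRingHom t) M.charmatrix.det) from rfl, RingHom.map_det]
  congr 1
  ext i j
  by_cases h : i = j
  · subst h
    simp [Matrix.charmatrix_apply_eq, Matrix.one_apply]
  · simp [Matrix.charmatrix_apply_ne _ _ _ h, Matrix.one_apply, h]

/-- For a finite simple graph `G` on `n ≥ 2` vertices, the largest Laplacian eigenvalue
satisfies `λ_max(G) ≤ max{d(x) + d(y) : x ≠ y}`; here `μ` is the nondecreasing
enumeration (with multiplicity) of the Laplacian eigenvalues, so `λ_max = μ (n-1)`, and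
the bound is expressed by exhibiting a pair `x ≠ y` with `μ (n-1) ≤ d(x) + d(y)`. -/
theorem lap_eigenvalue_le_max_degree_sum {n : ℕ} (hn : 2 ≤ n) (G : SimpleGraph (Fin n))
    [DecidableRel G.Adj] (μ : Fin n → ℝ) (hμ : Monotone μ)
    (hch : (G.lapMatrix ℝ).charpoly = ∏ i, (Polynomial.X - Polynomial.C (μ i))) :
    ∃ x y : Fin n, x ≠ y ∧ μ ⟨n - 1, by omega⟩ ≤ (G.degree x : ℝ) + (G.degree y : ℝ) := by
  set t : ℝ := μ ⟨n - 1, by omega⟩ with ht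
  -- `t` is a root of the characteristic polynomial
  have hroot : ((G.lapMatrix ℝ).charpoly).eval t = 0 := by
    rw [hch, Polynomial.eval_prod]
    exact Finset.prod_eq_zero (Finset.mem_univ ⟨n - 1, by omega⟩) (by simp [ht])
  have hdet : (t • (1 : Matrix (Fin n) (Fin n) ℝ) - G.lapMatrix ℝ).det = 0 := by
    rw [← charpoly_eval_eq_det]; exact hroot
  obtain ⟨v, hv0, hv⟩ := (Matrix.exists_mulVec_eq_zero_iff).2 hdet
  -- `v` is an eigenvector for `t`
  have heig : ∀ x, t * v x = (G.degree x : ℝ) * v x - ∑ u ∈ G.neighborFinset x, v u := by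
    intro x
    have := congrFun hv x
    rw [Matrix.sub_mulVec, Pi.sub_apply, Pi.zero_apply, sub_eq_zero] at this
    have h1 : ((t • (1 : Matrix (Fin n) (Fin n) ℝ)) *ᵥ v) x = t * v x := by
      rw [Matrix.smul_mulVec, Matrix.one_mulVec]; rfl
    rw [h1, SimpleGraph.lapMatrix_mulVec_apply] at this
    exact this
  -- pick `x` maximizing `|v ·|`, then `y` maximizing over the rest
  obtain ⟨x, -, hx⟩ := Finset.exists_max_image Finset.univ (fun i => |v i|) ⟨⟨0, by omega⟩, Finset.mem_univ _⟩
  have hxpos : 0 < |v x| := by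
    rcases Function.ne_iff.1 hv0 with ⟨i, hi⟩
    exact lt_of_lt_of_le (abs_pos.2 hi) (hx i (Finset.mem_univ i))
  have hne : (Finset.univ.erase x).Nonempty := by
    rw [← Finset.card_pos, Finset.card_erase_of_mem (Finset.mem_univ x)]
    simp only [Finset.card_univ, Fintype.card_fin]
    omega
  obtain ⟨y, hy_mem, hy⟩ := Finset.exists_max_image (Finset.univ.erase x) (fun i => |v i|) hne
  have hxy : y ≠ x := Finset.ne_of_mem_erase hy_mem
  refine ⟨x, y, hxy.symm, ?_⟩
  set dx : ℝ := (G.degree x : ℝ) with hdx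
  set dy : ℝ := (G.degree y : ℝ) with hdy
  have hdx0 : 0 ≤ dx := Nat.cast_nonneg _
  have hdy0 : 0 ≤ dy := Nat.cast_nonneg _
  -- key inequality at x: |t - dx| * |v x| ≤ dx * |v y|
  have key1 : |t - dx| * |v x| ≤ dx * |v y| := by
    have h := heig x
    have h2 : (t - dx) * v x = -∑ u ∈ G.neighborFinset x, v u := by ring_nf; linarith [h]
    calc |t - dx| * |v x| = |(t - dx) * v x| := (abs_mul _ _).symm
      _ = |∑ u ∈ G.neighborFinset x, v u| := by rw [h2, abs_neg]
      _ ≤ ∑ u ∈ G.neighborFinset x, |v u| := Finset.abs_sum_le_sum_abs _ _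
      _ ≤ ∑ _u ∈ G.neighborFinset x, |v y| := by
          refine Finset.sum_le_sum fun u hu => ?_
          refine hy u (Finset.mem_erase.2 ⟨?_, Finset.mem_univ u⟩)
          intro h
          exact (G.notMem_neighborFinset_self x) (h ▸ hu)
      _ = dx * |v y| := by
          rw [Finset.sum_const, nsmul_eq_mul, hdx, SimpleGraph.card_neighborFinset_eq_degree]
  have key2 : |t - dy| * |v y| ≤ dy * |v x| := by
    have h := heig y
    have h2 : (t - dy) * v y = -∑ u ∈ G.neighborFinset y, v u := by ring_nf; linarith [h]
    calc |t - dy| * |v y| = |(t - dy) * v y| := (abs_mul _ _).symm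
      _ = |∑ u ∈ G.neighborFinset y, v u| := by rw [h2, abs_neg]
      _ ≤ ∑ u ∈ G.neighborFinset y, |v u| := Finset.abs_sum_le_sum_abs _ _
      _ ≤ ∑ _u ∈ G.neighborFinset y, |v x| := by
          exact Finset.sum_le_sum fun u _ => hx u (Finset.mem_univ u)
      _ = dy * |v x| := by
          rw [Finset.sum_const, nsmul_eq_mul, hdy, SimpleGraph.card_neighborFinset_eq_degree]
  -- conclude
  by_contra hcon
  push_neg at hcon
  have h1 : dy < t - dx := by linarith
  have h2 : dx < t - dy := by linarith
  rw [abs_of_pos (by linarith : (0:ℝ) < t - dx)] at key1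
  rw [abs_of_pos (by linarith : (0:ℝ) < t - dy)] at key2
  have hvy_pos : 0 < |v y| := by nlinarith [abs_nonneg (v y)]
  nlinarith [mul_le_mul key1 key2 (mul_nonneg (by linarith) (abs_nonneg (v y))) (mul_nonneg hdx0 (abs_nonneg (v y)))]
end
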